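/- Fix 1 ≤ k ≤ m and α_1,…,α_m ∈ (0,1) with Σ α_i = 1. Let (F_S)_{|S|=k} be generalized Walsh functions on [0,1]^m such that each F_S with |S| = k ≥ 2 is alternating with respect to the coordinates in S, and for every S ⊆ [m−1] with |S| = k and ℓ = m, the identity (1/Π_{i∈S} α_i) F_S(x) = Σ_{i∈S} (1/Π_{j∈S_i} α_j) F_{S_i}(x^{(i)}) holds with S_i = S ∪ {m} \ {i}. Then for every partition A_1,…,A_m of [0,1] with λ(A_i) = α_i, we have ∫_{A_1 × ⋯ × A_m} Σ_{|S|=k} F_S = 0. -/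

import Mathlib

open MeasureTheory

/-- The unit cube `[0,1]^m` as a subset of `Fin m → ℝ`. -/
def unitCube (m : ℕ) : Set (Fin m → ℝ) := Set.univ.pi fun _ => Set.Icc (0 : ℝ) 1

namespace LevelK

lemma cube_measurable {m : ℕ} : MeasurableSet (unitCube m) :=
  MeasurableSet.univ_pi fun _ => measurableSet_Icc

lemma pi_subset_cube {m : ℕ} {B : Fin m → Set ℝ} (hB : ∀ i, B i ⊆ Set.Icc (0:ℝ) 1) :
    Set.univ.pi B ⊆ unitCube m := fun x hx i _ => hB i (hx i (Set.mem_univ i))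

variable {n : ℕ}

lemma preimage_insertNth (j : Fin (n+1)) (B : Fin (n+1) → Set ℝ) :
    (fun z : ℝ × (Fin n → ℝ) => j.insertNth z.1 z.2) ⁻¹' (Set.univ.pi B)
      = (B j) ×ˢ (Set.univ.pi fun l => B (j.succAbove l)) := by
  ext ⟨t, y⟩
  simp only [Set.mem_preimage, Set.mem_univ_pi, Set.mem_prod, Fin.forall_iff_succAbove j,
    Fin.insertNth_apply_same, Fin.insertNth_apply_succAbove]

lemma insertNth_coe (j : Fin (n+1)) :
    ⇑(MeasurableEquiv.piFinSuccAbove (fun _ : Fin (n+1) => ℝ) j).symm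
      = fun z : ℝ × (Fin n → ℝ) => j.insertNth z.1 z.2 := by
  ext z
  simp [MeasurableEquiv.piFinSuccAbove]
  rfl

end LevelK
namespace LevelK

lemma pi_to_prod (j : Fin (n+1)) (B : Fin (n+1) → Set ℝ) (F : (Fin (n+1) → ℝ) → ℂ) :
    ∫ x in Set.univ.pi B, F x
      = ∫ z in (B j) ×ˢ (Set.univ.pi fun l => B (j.succAbove l)),
          F (j.insertNth z.1 z.2) ∂((volume : Measure ℝ).prod (volume : Measure (Fin n → ℝ))) := by
  have hmp : MeasurePreserving
      (MeasurableEquiv.piFinSuccAbove (fun _ : Fin (n+1) => ℝ) j).symm volume volume :=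
    (volume_preserving_piFinSuccAbove (fun _ : Fin (n+1) => ℝ) j).symm
  have h := hmp.setIntegral_preimage_emb
    (MeasurableEquiv.piFinSuccAbove (fun _ : Fin (n+1) => ℝ) j).symm.measurableEmbedding
    F (Set.univ.pi B)
  rw [insertNth_coe j, preimage_insertNth] at h
  rw [← h, Measure.volume_eq_prod]

lemma pi_to_prod_integrable (j : Fin (n+1)) (B : Fin (n+1) → Set ℝ) (F : (Fin (n+1) → ℝ) → ℂ)
    (hFint : IntegrableOn F (Set.univ.pi B)) :
    IntegrableOn (fun z : ℝ × (Fin n → ℝ) => F (j.insertNth z.1 z.2))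
      ((B j) ×ˢ (Set.univ.pi fun l => B (j.succAbove l)))
      ((volume : Measure ℝ).prod (volume : Measure (Fin n → ℝ))) := by
  have hmp : MeasurePreserving
      (MeasurableEquiv.piFinSuccAbove (fun _ : Fin (n+1) => ℝ) j).symm volume volume :=
    (volume_preserving_piFinSuccAbove (fun _ : Fin (n+1) => ℝ) j).symm
  have h := (hmp.integrableOn_comp_preimage
    (MeasurableEquiv.piFinSuccAbove (fun _ : Fin (n+1) => ℝ) j).symm.measurableEmbedding
    (f := F) (s := Set.univ.pi B)).mpr hFint
  rw [insertNth_coe j, preimage_insertNth] at h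
  rw [← Measure.volume_eq_prod]
  exact h

end LevelK
namespace LevelK

/-- Integrate out coordinate `j` on which `F` does not depend. -/
lemma integral_pi_indep (j : Fin (n+1)) (B : Fin (n+1) → Set ℝ)
    (hBsub : ∀ i, B i ⊆ Set.Icc (0:ℝ) 1)
    (F : (Fin (n+1) → ℝ) → ℂ) (hFint : IntegrableOn F (unitCube (n+1)))
    (hdep : ∀ x t, F (Function.update x j t) = F x) :
    ∫ x in Set.univ.pi B, F x
      = (volume (B j)).toReal •
          ∫ x in Set.univ.pi (Function.update B j (Set.Icc (0:ℝ) 1)), F x := by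
  have key : ∀ (t : ℝ) (y : Fin n → ℝ), F (j.insertNth t y) = F (j.insertNth 0 y) := by
    intro t y
    have h1 := Fin.update_insertNth (α := fun _ : Fin (n+1) => ℝ) j (0:ℝ) t y
    rw [← h1, hdep]
  have hB' : ∀ i, Function.update B j (Set.Icc (0:ℝ) 1) i ⊆ Set.Icc (0:ℝ) 1 := by
    intro i
    rcases eq_or_ne i j with rfl | h
    · simp
    · rw [Function.update_of_ne h]; exact hBsub i
  have hsucc : ∀ l, Function.update B j (Set.Icc (0:ℝ) 1) (j.succAbove l) = B (j.succAbove l) :=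
    fun l => Function.update_of_ne (j.succAbove_ne l) _ _
  rw [pi_to_prod j B F, pi_to_prod j _ F]
  rw [setIntegral_prod _ (pi_to_prod_integrable j B F (hFint.mono_set (pi_subset_cube hBsub))),
    setIntegral_prod _ (pi_to_prod_integrable j _ F (hFint.mono_set (pi_subset_cube hB')))]
  simp_rw [key, hsucc, Function.update_self]
  rw [setIntegral_const, setIntegral_const, Real.volume_real_Icc]
  norm_num [measureReal_def]

/-- If `F` has zero marginal in coordinate `j` and the `j`-th constraint is the whole
interval, the integral vanishes. -/
lemma integral_pi_marg (j : Fin (n+1)) (B : Fin (n+1) → Set ℝ)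
    (hBsub : ∀ i, B i ⊆ Set.Icc (0:ℝ) 1) (hBj : B j = Set.Icc (0:ℝ) 1)
    (F : (Fin (n+1) → ℝ) → ℂ) (hFint : IntegrableOn F (unitCube (n+1)))
    (hmarg : ∀ x, ∫ t in (0:ℝ)..1, F (Function.update x j t) = 0) :
    ∫ x in Set.univ.pi B, F x = 0 := by
  have hint := pi_to_prod_integrable j B F (hFint.mono_set (pi_subset_cube hBsub))
  rw [pi_to_prod j B F]
  simp only [IntegrableOn, ← Measure.prod_restrict] at hint
  rw [← Measure.prod_restrict]
  rw [MeasureTheory.integral_prod_symm _ hint]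
  have inner : ∀ y : Fin n → ℝ,
      (∫ t, F (j.insertNth t y) ∂(volume.restrict (B j))) = 0 := by
    intro y
    have h2 : ∀ t : ℝ, F (j.insertNth t y) = F (Function.update (j.insertNth (0:ℝ) y) j t) := by
      intro t
      have h1 := Fin.update_insertNth (α := fun _ : Fin (n+1) => ℝ) j (0:ℝ) t y
      rw [h1]
    simp_rw [h2]
    have h3 : (∫ t in Set.Icc (0:ℝ) 1, F (Function.update (j.insertNth (0:ℝ) y) j t)) = 0 := by
      rw [MeasureTheory.integral_Icc_eq_integral_Ioc,
        ← intervalIntegral.integral_of_le (by norm_num : (0:ℝ) ≤ 1)]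
      exact hmarg _
    rw [hBj]
    exact h3
  simp_rw [inner, integral_zero]

end LevelK
namespace LevelK

variable {m : ℕ}

/-- Precomposition with a permutation, as a measurable equiv. -/
def permEquiv (σ : Equiv.Perm (Fin m)) : (Fin m → ℝ) ≃ᵐ (Fin m → ℝ) :=
  MeasurableEquiv.piCongrLeft (fun _ => ℝ) σ.symm

lemma permEquiv_coe (σ : Equiv.Perm (Fin m)) :
    ⇑(permEquiv σ) = fun x : Fin m → ℝ => x ∘ σ := by
  ext x b
  rw [permEquiv, MeasurableEquiv.coe_piCongrLeft]
  have := Equiv.piCongrLeft_apply_apply (fun _ : Fin m => ℝ) σ.symm x (σ b)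
  simpa using this

lemma mp_perm (σ : Equiv.Perm (Fin m)) :
    MeasurePreserving (fun x : Fin m → ℝ => x ∘ σ) volume volume := by
  rw [← permEquiv_coe σ]
  exact volume_measurePreserving_piCongrLeft (fun _ => ℝ) σ.symm

lemma emb_perm (σ : Equiv.Perm (Fin m)) :
    MeasurableEmbedding (fun x : Fin m → ℝ => x ∘ σ) := by
  rw [← permEquiv_coe σ]
  exact (permEquiv σ).measurableEmbedding

lemma setIntegral_perm (σ : Equiv.Perm (Fin m)) (E : Set (Fin m → ℝ)) (G : (Fin m → ℝ) → ℂ) :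
    ∫ x in (fun x : Fin m → ℝ => x ∘ σ) ⁻¹' E, G (x ∘ σ) = ∫ x in E, G x :=
  (mp_perm σ).setIntegral_preimage_emb (emb_perm σ) G E

lemma integrableOn_perm {σ : Equiv.Perm (Fin m)} {E : Set (Fin m → ℝ)} {G : (Fin m → ℝ) → ℂ}
    (hG : IntegrableOn G E) :
    IntegrableOn (fun x : Fin m → ℝ => G (x ∘ σ)) ((fun x : Fin m → ℝ => x ∘ σ) ⁻¹' E) :=
  ((mp_perm σ).integrableOn_comp_preimage (emb_perm σ)).mpr hG

lemma perm_preimage_cube (σ : Equiv.Perm (Fin m)) :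
    (fun x : Fin m → ℝ => x ∘ σ) ⁻¹' (unitCube m) = unitCube m := by
  ext x
  simp only [unitCube, Set.mem_preimage, Set.mem_univ_pi, Function.comp_apply]
  exact ⟨fun h i => by simpa using h (σ.symm i), fun h i => h _⟩

end LevelK
namespace LevelK

lemma perm_preimage_pi {m : ℕ} (σ : Equiv.Perm (Fin m)) (C : Fin m → Set ℝ) :
    (fun x : Fin m → ℝ => x ∘ σ) ⁻¹' (Set.univ.pi C)
      = Set.univ.pi (fun j => C (σ.symm j)) := by
  ext x
  simp only [Set.mem_preimage, Set.mem_univ_pi, Function.comp_apply]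
  constructor
  · intro h j
    simpa using h (σ.symm j)
  · intro h j
    simpa using h (σ j)

end LevelK


open LevelK in
/-- if the level-`k` Walsh functions are alternating and satisfy the
recursion formula (with `ℓ = m`, the last coordinate), then the integral of
`Σ_{|S|=k} F_S` over every `α`-partition vanishes. -/
theorem level_k_vanishes {m k : ℕ} (hk1 : 1 ≤ k) (hkm : k ≤ m)
    (α : Fin m → ℝ) (hα : ∀ i, α i ∈ Set.Ioo (0:ℝ) 1) (hsum : ∑ i, α i = 1)
    (F : Finset (Fin m) → (Fin m → ℝ) → ℂ)
    (hFint : ∀ S : Finset (Fin m), S.card = k → IntegrableOn (F S) (unitCube m))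
    (hFdep : ∀ S : Finset (Fin m), S.card = k →
        ∀ x y : Fin m → ℝ, (∀ i ∈ S, x i = y i) → F S x = F S y)
    (hFmarg : ∀ S : Finset (Fin m), S.card = k → ∀ i ∈ S, ∀ x : Fin m → ℝ,
        ∫ t in (0:ℝ)..1, F S (Function.update x i t) = 0)
    -- alternating (this is nonvacuous exactly when `k ≥ 2`)
    (halt : ∀ S : Finset (Fin m), S.card = k → ∀ i ∈ S, ∀ j ∈ S, i ≠ j →
        ∀ x : Fin m → ℝ, F S (x ∘ Equiv.swap i j) = - F S x)
    -- the recursion with ℓ = m (the last coordinate of `Fin m`)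
    (hrec : ∀ S : Finset (Fin m), S.card = k →
        (⟨m - 1, by omega⟩ : Fin m) ∉ S →
        ∀ x : Fin m → ℝ,
        ((∏ i ∈ S, α i : ℝ) : ℂ)⁻¹ * F S x =
        ∑ i ∈ S,
          ((∏ j ∈ (Insert.insert (⟨m - 1, by omega⟩ : Fin m) S).erase i, α j : ℝ) : ℂ)⁻¹ *
          F ((Insert.insert (⟨m - 1, by omega⟩ : Fin m) S).erase i)
            (x ∘ Equiv.swap (⟨m - 1, by omega⟩ : Fin m) i)) :
    ∀ A : Fin m → Set ℝ, (∀ i, MeasurableSet (A i)) →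
      (∀ i j, i ≠ j → Disjoint (A i) (A j)) →
      (⋃ i, A i) = Set.Icc (0:ℝ) 1 →
      (∀ i, volume (A i) = ENNReal.ofReal (α i)) →
      ∫ x in Set.univ.pi A, (∑ S ∈ Finset.univ.filter (fun S : Finset (Fin m) => S.card = k),
        F S x) = 0 := by
  intro A hAmeas hAdisj hAunion hAvol
  obtain ⟨n, rfl⟩ : ∃ n, m = n + 1 := ⟨m - 1, by omega⟩
  classical
  set ℓ : Fin (n+1) := ⟨n + 1 - 1, by omega⟩ with hℓdef
  have hαpos : ∀ i, 0 < α i := fun i => (hα i).1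
  have hAsub : ∀ i, A i ⊆ Set.Icc (0:ℝ) 1 := by
    intro i; rw [← hAunion]; exact Set.subset_iUnion A i
  have hvolA : ∀ i, (volume (A i)).toReal = α i := by
    intro i; rw [hAvol i, ENNReal.toReal_ofReal (hαpos i).le]
  set B : Finset (Fin (n+1)) → Fin (n+1) → Set ℝ :=
    fun V j => if j ∈ V then A j else Set.Icc (0:ℝ) 1 with hB
  have hBsub : ∀ V j, B V j ⊆ Set.Icc (0:ℝ) 1 := by
    intro V j; by_cases h : j ∈ V <;> simp [hB, h, hAsub j]
  have hBmeas : ∀ V j, MeasurableSet (B V j) := by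
    intro V j; by_cases h : j ∈ V <;> simp [hB, h, hAmeas j, measurableSet_Icc]
  have hDsub : ∀ V, Set.univ.pi (B V) ⊆ unitCube (n+1) :=
    fun V => pi_subset_cube (hBsub V)
  have hJint : ∀ S : Finset (Fin (n+1)), S.card = k → ∀ V,
      IntegrableOn (F S) (Set.univ.pi (B V)) :=
    fun S hS V => (hFint S hS).mono_set (hDsub V)
  set J : Finset (Fin (n+1)) → ℂ := fun S => ∫ x in Set.univ.pi (B S), F S x with hJ
  set K : Finset (Fin (n+1)) → Fin (n+1) → ℂ :=
    fun T i => ∫ x in Set.univ.pi (Function.update (B (T.erase ℓ)) ℓ (A i)), F T x with hK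
  have hdepF : ∀ S : Finset (Fin (n+1)), S.card = k → ∀ a, a ∉ S →
      ∀ (x : Fin (n+1) → ℝ) (t : ℝ), F S (Function.update x a t) = F S x := by
    intro S hS a ha x t
    refine hFdep S hS _ x (fun i hi => Function.update_of_ne ?_ _ _)
    rintro rfl; exact ha hi
  -- (1) integrate out coordinates outside S
  have hL1 : ∀ S : Finset (Fin (n+1)), S.card = k → ∀ W : Finset (Fin (n+1)),
      ∫ x in Set.univ.pi (B (S ∪ W)), F S x = (∏ j ∈ W \ S, α j) • J S := by
    intro S hS W
    induction W using Finset.induction_on with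
    | empty => simp [hJ]
    | @insert a W ha ih =>
      by_cases haS : a ∈ S
      · rw [Finset.union_insert, Finset.insert_eq_self.mpr (Finset.mem_union_left W haS),
          Finset.insert_sdiff_of_mem W haS]
        exact ih
      · have hBu : Function.update (B (S ∪ insert a W)) a (Set.Icc (0:ℝ) 1) = B (S ∪ W) := by
          funext j
          rcases eq_or_ne j a with rfl | h
          · rw [Function.update_self]
            have : j ∉ S ∪ W := by simp [haS, ha]
            simp [hB, this]
          · rw [Function.update_of_ne h]
            have : (j ∈ S ∪ insert a W) = (j ∈ S ∪ W) := by
              simp [Finset.mem_union, Finset.mem_insert, h]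
            simp only [hB, this]
        have hBa : B (S ∪ insert a W) a = A a := by
          have : a ∈ S ∪ insert a W := by simp
          simp [hB, this]
        rw [integral_pi_indep a (B (S ∪ insert a W)) (hBsub _) (F S) (hFint S hS)
          (fun x t => hdepF S hS a haS x t), hBu, hBa, hvolA a, ih]
        rw [Finset.insert_sdiff_of_notMem W haS, Finset.prod_insert (by simp [ha]),
          smul_smul]
  -- (3) marginal vanishing
  have hMarg : ∀ T : Finset (Fin (n+1)), T.card = k → ℓ ∈ T →
      ∫ x in Set.univ.pi (B (T.erase ℓ)), F T x = 0 := by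
    intro T hT hℓT
    refine integral_pi_marg ℓ _ (hBsub _) ?_ (F T) (hFint T hT) (fun x => hFmarg T hT ℓ hℓT x)
    simp [hB, Finset.notMem_erase]
  -- (4) splitting the last coordinate over the partition
  have hSplit : ∀ T : Finset (Fin (n+1)), T.card = k → ℓ ∈ T →
      (∑ i, K T i) = ∫ x in Set.univ.pi (B (T.erase ℓ)), F T x := by
    intro T hT hℓT
    have hmeas : ∀ i : Fin (n+1),
        MeasurableSet (Set.univ.pi (Function.update (B (T.erase ℓ)) ℓ (A i))) := by
      intro i
      apply MeasurableSet.univ_pi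
      intro j
      rcases eq_or_ne j ℓ with rfl | h
      · rw [Function.update_self]; exact hAmeas i
      · rw [Function.update_of_ne h]; exact hBmeas _ j
    have hdisj : Pairwise (Function.onFun Disjoint
        fun i => Set.univ.pi (Function.update (B (T.erase ℓ)) ℓ (A i))) := by
      intro i i' hne
      rw [Function.onFun, Set.disjoint_left]
      intro x hx hx'
      have h1 := hx ℓ (Set.mem_univ ℓ)
      have h2 := hx' ℓ (Set.mem_univ ℓ)
      rw [Function.update_self] at h1 h2
      exact Set.disjoint_left.mp (hAdisj i i' hne) h1 h2
    have hintK : ∀ i : Fin (n+1),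
        IntegrableOn (F T) (Set.univ.pi (Function.update (B (T.erase ℓ)) ℓ (A i))) := by
      intro i
      refine (hFint T hT).mono_set (pi_subset_cube ?_)
      intro j
      rcases eq_or_ne j ℓ with rfl | h
      · rw [Function.update_self]; exact hAsub i
      · rw [Function.update_of_ne h]; exact hBsub _ j
    have hunion : (⋃ i, Set.univ.pi (Function.update (B (T.erase ℓ)) ℓ (A i)))
        = Set.univ.pi (B (T.erase ℓ)) := by
      ext x
      simp only [Set.mem_iUnion, Set.mem_univ_pi]
      constructor
      · rintro ⟨i, h⟩ j
        rcases eq_or_ne j ℓ with rfl | hj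
        · have h1 := h ℓ
          rw [Function.update_self] at h1
          have h2 : x ℓ ∈ Set.Icc (0:ℝ) 1 := hAsub i h1
          simpa [hB, Finset.notMem_erase] using h2
        · have h1 := h j
          rwa [Function.update_of_ne hj] at h1
      · intro h
        have hx : x ℓ ∈ Set.Icc (0:ℝ) 1 := by
          simpa [hB, Finset.notMem_erase] using h ℓ
        rw [← hAunion] at hx
        obtain ⟨i, hi⟩ := Set.mem_iUnion.mp hx
        refine ⟨i, fun j => ?_⟩
        rcases eq_or_ne j ℓ with rfl | hj
        · rwa [Function.update_self]
        · rw [Function.update_of_ne hj]; exact h j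
      
    rw [← hunion]
    exact (MeasureTheory.integral_iUnion_fintype hmeas hdisj hintK).symm
  -- (5) K T ℓ = J T
  have hKl : ∀ T : Finset (Fin (n+1)), ℓ ∈ T → K T ℓ = J T := by
    intro T hℓT
    have : Function.update (B (T.erase ℓ)) ℓ (A ℓ) = B T := by
      funext j
      rcases eq_or_ne j ℓ with rfl | h
      · rw [Function.update_self]; simp [hB, hℓT]
      · rw [Function.update_of_ne h]
        have : (j ∈ T.erase ℓ) = (j ∈ T) := by simp [Finset.mem_erase, h]
        simp only [hB, this]
    rw [hK, hJ]
    simp only [this]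
  -- (6) alternating kills the off-diagonal terms
  have hKalt : ∀ T : Finset (Fin (n+1)), T.card = k → ℓ ∈ T → ∀ i ∈ T, i ≠ ℓ → K T i = 0 := by
    intro T hT hℓT i hiT hne
    have hCσ : ∀ j, Function.update (B (T.erase ℓ)) ℓ (A i) ((Equiv.swap ℓ i) j)
        = Function.update (B (T.erase ℓ)) ℓ (A i) j := by
      intro j
      rcases eq_or_ne j ℓ with rfl | hjℓ
      · rw [Equiv.swap_apply_left, Function.update_of_ne hne, Function.update_self]
        have : i ∈ T.erase ℓ := Finset.mem_erase.mpr ⟨hne, hiT⟩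
        simp [hB, this]
      · rcases eq_or_ne j i with rfl | hji
        · rw [Equiv.swap_apply_right, Function.update_self, Function.update_of_ne hne]
          have : j ∈ T.erase ℓ := Finset.mem_erase.mpr ⟨hne, hiT⟩
          simp [hB, this]
        · rw [Equiv.swap_apply_of_ne_of_ne hjℓ hji]
    have hpre : (fun x : Fin (n+1) → ℝ => x ∘ (Equiv.swap ℓ i)) ⁻¹'
        (Set.univ.pi (Function.update (B (T.erase ℓ)) ℓ (A i)))
        = Set.univ.pi (Function.update (B (T.erase ℓ)) ℓ (A i)) := by
      have heq : (fun j => Function.update (B (T.erase ℓ)) ℓ (A i) ((Equiv.swap ℓ i).symm j))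
          = Function.update (B (T.erase ℓ)) ℓ (A i) := by
        funext j
        rw [Equiv.symm_swap]
        exact hCσ j
      rw [perm_preimage_pi, heq]
    have h1 := setIntegral_perm (Equiv.swap ℓ i)
      (Set.univ.pi (Function.update (B (T.erase ℓ)) ℓ (A i))) (F T)
    rw [hpre] at h1
    have h2 : ∀ x : Fin (n+1) → ℝ, F T (x ∘ (Equiv.swap ℓ i)) = - F T x :=
      fun x => halt T hT ℓ hℓT i hiT (Ne.symm hne) x
    simp_rw [h2, integral_neg] at h1
    have h3 : K T i + K T i = 0 := by
      simp only [hK]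
      nth_rewrite 1 [← h1]
      ring
    exact add_self_eq_zero.mp h3
  -- (7) recursion
  have hRec : ∀ S : Finset (Fin (n+1)), S.card = k → ℓ ∉ S →
      ((∏ i ∈ S, α i : ℝ) : ℂ)⁻¹ * J S
        = ∑ i ∈ S, ((∏ j ∈ (insert ℓ S).erase i, α j : ℝ) : ℂ)⁻¹ * K ((insert ℓ S).erase i) i := by
    intro S hS hℓS
    have hSne : ∀ i ∈ S, i ≠ ℓ := fun i hi h => hℓS (h ▸ hi)
    have hTcard : ∀ i ∈ S, ((insert ℓ S).erase i).card = k := by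
      intro i hi
      rw [Finset.card_erase_of_mem (Finset.mem_insert_of_mem hi),
        Finset.card_insert_of_notMem hℓS, hS]
      simp
    have hTe : ∀ i ∈ S, ((insert ℓ S).erase i).erase ℓ = S.erase i := by
      intro i hi
      rw [Finset.erase_right_comm, Finset.erase_insert hℓS]
    have hint2 : ∀ i ∈ S, IntegrableOn
        (fun x : Fin (n+1) → ℝ => F ((insert ℓ S).erase i) (x ∘ Equiv.swap ℓ i))
        (Set.univ.pi (B S)) := by
      intro i hi
      have h0 := integrableOn_perm (σ := Equiv.swap ℓ i) (hFint _ (hTcard i hi))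
      rw [perm_preimage_cube] at h0
      exact h0.mono_set (hDsub S)
    calc ((∏ i ∈ S, α i : ℝ) : ℂ)⁻¹ * J S
        = ∫ x in Set.univ.pi (B S), ((∏ i ∈ S, α i : ℝ) : ℂ)⁻¹ * F S x := by
          simp only [hJ]
          exact (MeasureTheory.integral_const_mul _ _).symm
      _ = ∫ x in Set.univ.pi (B S), ∑ i ∈ S,
            ((∏ j ∈ (insert ℓ S).erase i, α j : ℝ):ℂ)⁻¹ *
              F ((insert ℓ S).erase i) (x ∘ Equiv.swap ℓ i) := by
          apply MeasureTheory.integral_congr_ae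
          filter_upwards with x
          exact hrec S hS hℓS x
      _ = ∑ i ∈ S, ∫ x in Set.univ.pi (B S),
            ((∏ j ∈ (insert ℓ S).erase i, α j : ℝ):ℂ)⁻¹ *
              F ((insert ℓ S).erase i) (x ∘ Equiv.swap ℓ i) := by
          apply MeasureTheory.integral_finset_sum
          intro i hi
          exact (hint2 i hi).const_mul _
      _ = ∑ i ∈ S, ((∏ j ∈ (insert ℓ S).erase i, α j : ℝ):ℂ)⁻¹ * K ((insert ℓ S).erase i) i := by
          refine Finset.sum_congr rfl (fun i hi => ?_)
          rw [MeasureTheory.integral_const_mul]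
          congr 1
          have hCB : (fun j => Function.update (B (((insert ℓ S).erase i).erase ℓ)) ℓ (A i)
              ((Equiv.swap ℓ i).symm j)) = B S := by
            funext j
            rw [Equiv.symm_swap]
            rcases eq_or_ne j ℓ with rfl | hjℓ
            · rw [Equiv.swap_apply_left, Function.update_of_ne (hSne i hi), hTe i hi]
              have h1 : i ∉ S.erase i := Finset.notMem_erase i S
              simp [hB, h1, hℓS]
            · rcases eq_or_ne j i with rfl | hji
              · rw [Equiv.swap_apply_right, Function.update_self]
                simp [hB, hi]
              · rw [Equiv.swap_apply_of_ne_of_ne hjℓ hji, Function.update_of_ne hjℓ, hTe i hi]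
                have h1 : (j ∈ S.erase i) = (j ∈ S) := by simp [Finset.mem_erase, hji]
                simp only [hB, h1]
          have hpre := perm_preimage_pi (Equiv.swap ℓ i)
            (Function.update (B (((insert ℓ S).erase i).erase ℓ)) ℓ (A i))
          rw [hCB] at hpre
          simp only [hK]
          rw [← hpre]
          exact setIntegral_perm (Equiv.swap ℓ i) _ (F ((insert ℓ S).erase i))
  -- (8) reindex
  have hreindex : (∑ S ∈ Finset.univ.filter (fun S : Finset (Fin (n+1)) => S.card = k ∧ ℓ ∉ S),
        ((∏ j ∈ S, α j : ℝ):ℂ)⁻¹ * J S)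
      = ∑ T ∈ Finset.univ.filter (fun T : Finset (Fin (n+1)) => T.card = k ∧ ℓ ∈ T),
          ∑ i ∈ Tᶜ, ((∏ j ∈ T, α j : ℝ):ℂ)⁻¹ * K T i := by
    have h1 : ∀ S ∈ Finset.univ.filter (fun S : Finset (Fin (n+1)) => S.card = k ∧ ℓ ∉ S),
        ((∏ j ∈ S, α j : ℝ):ℂ)⁻¹ * J S
        = ∑ i ∈ S, ((∏ j ∈ (insert ℓ S).erase i, α j : ℝ):ℂ)⁻¹ * K ((insert ℓ S).erase i) i := by
      intro S hS
      rw [Finset.mem_filter] at hS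
      exact hRec S hS.2.1 hS.2.2
    rw [Finset.sum_congr rfl h1, Finset.sum_sigma', Finset.sum_sigma']
    refine Finset.sum_bij'
      (fun p _ => (⟨(insert ℓ p.1).erase p.2, p.2⟩ : Σ _ : Finset (Fin (n+1)), Fin (n+1)))
      (fun p _ => (⟨(insert p.2 p.1).erase ℓ, p.2⟩ : Σ _ : Finset (Fin (n+1)), Fin (n+1)))
      ?_ ?_ ?_ ?_ ?_
    · rintro ⟨S, i⟩ hp
      rw [Finset.mem_sigma, Finset.mem_filter] at hp
      obtain ⟨⟨-, hSk, hℓS⟩, hiS⟩ := hp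
      have hiℓ : ℓ ≠ i := fun h => hℓS (h ▸ hiS)
      rw [Finset.mem_sigma, Finset.mem_filter]
      refine ⟨⟨Finset.mem_univ _, ?_, ?_⟩, ?_⟩
      · rw [Finset.card_erase_of_mem (Finset.mem_insert_of_mem hiS),
          Finset.card_insert_of_notMem hℓS, hSk]
        simp
      · exact Finset.mem_erase.mpr ⟨hiℓ, Finset.mem_insert_self ℓ S⟩
      · exact Finset.mem_compl.mpr (Finset.notMem_erase i _)
    · rintro ⟨T, i⟩ hp
      rw [Finset.mem_sigma, Finset.mem_filter] at hp
      obtain ⟨⟨-, hTk, hℓT⟩, hiT⟩ := hp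
      rw [Finset.mem_compl] at hiT
      have hiℓ : i ≠ ℓ := fun h => hiT (h ▸ hℓT)
      rw [Finset.mem_sigma, Finset.mem_filter]
      refine ⟨⟨Finset.mem_univ _, ?_, Finset.notMem_erase ℓ _⟩, ?_⟩
      · rw [Finset.card_erase_of_mem (Finset.mem_insert_of_mem hℓT),
          Finset.card_insert_of_notMem hiT, hTk]
        simp
      · exact Finset.mem_erase.mpr ⟨hiℓ, Finset.mem_insert_self i T⟩
    · rintro ⟨S, i⟩ hp
      rw [Finset.mem_sigma, Finset.mem_filter] at hp
      obtain ⟨⟨-, hSk, hℓS⟩, hiS⟩ := hp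
      have h2 : (insert i ((insert ℓ S).erase i)).erase ℓ = S := by
        rw [Finset.insert_erase (Finset.mem_insert_of_mem hiS), Finset.erase_insert hℓS]
      simp only [h2]
    · rintro ⟨T, i⟩ hp
      rw [Finset.mem_sigma, Finset.mem_filter] at hp
      obtain ⟨⟨-, hTk, hℓT⟩, hiT⟩ := hp
      rw [Finset.mem_compl] at hiT
      have h2 : (insert ℓ ((insert i T).erase ℓ)).erase i = T := by
        rw [Finset.insert_erase (Finset.mem_insert_of_mem hℓT), Finset.erase_insert hiT]
      simp only [h2]
    · rintro ⟨S, i⟩ hp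
      rfl
  -- (9) per-T vanishing
  have hTzero : ∀ T ∈ Finset.univ.filter (fun T : Finset (Fin (n+1)) => T.card = k ∧ ℓ ∈ T),
      ((∏ j ∈ T, α j : ℝ):ℂ)⁻¹ * J T + ∑ i ∈ Tᶜ, ((∏ j ∈ T, α j : ℝ):ℂ)⁻¹ * K T i = 0 := by
    intro T hT0
    rw [Finset.mem_filter] at hT0
    obtain ⟨-, hTk, hℓT⟩ := hT0
    have h3 : ∑ i ∈ T, K T i = J T := by
      rw [← Finset.add_sum_erase T (K T) hℓT, hKl T hℓT,
        Finset.sum_eq_zero (fun i hi => hKalt T hTk hℓT i (Finset.mem_erase.mp hi).2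
          (Finset.mem_erase.mp hi).1), add_zero]
    have h2 : (∑ i ∈ T, K T i) + ∑ i ∈ Tᶜ, K T i = ∑ i, K T i :=
      Finset.sum_add_sum_compl T _
    rw [hSplit T hTk hℓT, hMarg T hTk hℓT, h3] at h2
    have e1 : ∑ i ∈ Tᶜ, K T i = - J T := eq_neg_of_add_eq_zero_right h2
    rw [← Finset.mul_sum, e1]
    ring
  -- key sum
  have hkey : (∑ S ∈ Finset.univ.filter (fun S : Finset (Fin (n+1)) => S.card = k),
      ((∏ j ∈ S, α j : ℝ):ℂ)⁻¹ * J S) = 0 := by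
    have hsplitsum := Finset.sum_filter_add_sum_filter_not
      (Finset.univ.filter (fun S : Finset (Fin (n+1)) => S.card = k)) (fun S => ℓ ∈ S)
      (fun S => ((∏ j ∈ S, α j : ℝ):ℂ)⁻¹ * J S)
    rw [Finset.filter_filter, Finset.filter_filter] at hsplitsum
    rw [← hsplitsum, hreindex, ← Finset.sum_add_distrib]
    exact Finset.sum_eq_zero hTzero
  -- (2)+(10) assemble
  have hpiA : Set.univ.pi A = Set.univ.pi (B Finset.univ) := by
    have hBA : B Finset.univ = A := by funext j; simp [hB]
    rw [hBA]
  have hintA : ∀ S ∈ Finset.univ.filter (fun S : Finset (Fin (n+1)) => S.card = k),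
      IntegrableOn (F S) (Set.univ.pi A) := by
    intro S hS
    rw [hpiA]
    exact hJint S (Finset.mem_filter.mp hS).2 _
  rw [MeasureTheory.integral_finset_sum _ hintA]
  have hterm : ∀ S ∈ Finset.univ.filter (fun S : Finset (Fin (n+1)) => S.card = k),
      ∫ x in Set.univ.pi A, F S x
        = ((∏ j, α j : ℝ) : ℂ) * (((∏ j ∈ S, α j : ℝ):ℂ)⁻¹ * J S) := by
    intro S hS
    have hSk := (Finset.mem_filter.mp hS).2
    have h1 : ∫ x in Set.univ.pi A, F S x = (∏ j ∈ Finset.univ \ S, α j) • J S := by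
      have h2 := hL1 S hSk Finset.univ
      rw [Finset.union_eq_right.mpr (Finset.subset_univ S)] at h2
      rw [hpiA]
      exact h2
    have hprodS : ((∏ j ∈ S, α j : ℝ):ℂ) ≠ 0 := by
      exact_mod_cast ne_of_gt (Finset.prod_pos (fun j _ => hαpos j))
    have hsplit2 : (∏ j ∈ S, α j) * (∏ j ∈ Finset.univ \ S, α j) = ∏ j, α j := by
      rw [← Finset.prod_union Finset.sdiff_disjoint.symm,
        Finset.union_sdiff_of_subset (Finset.subset_univ S)]
    have hc : ((∏ j ∈ Finset.univ \ S, α j : ℝ) : ℂ)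
        = ((∏ j, α j : ℝ) : ℂ) * (((∏ j ∈ S, α j : ℝ):ℂ))⁻¹ := by
      rw [eq_mul_inv_iff_mul_eq₀ hprodS, mul_comm]
      exact_mod_cast congrArg (fun r : ℝ => (r : ℂ)) hsplit2
    rw [h1, Complex.real_smul, hc]
    ring
  rw [Finset.sum_congr rfl hterm, ← Finset.mul_sum, hkey, mul_zero]
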